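/- Let A be a real n×n matrix. A is diagonalizable over ℝ if and only if there exist a symmetric positive definite matrix A₁ and a symmetric matrix A₂ such that A = A₁·A₂; likewise, A is diagonalizable over ℝ if and only if there exist such matrices with A = A₂·A₁. -/

import Mathlib

open Matrix

/-- A real square matrix is *normally elliptic* if every eigenvalue
(i.e. every element of the spectrum of the associated complex matrix)
has positive real part. -/
def NormallyElliptic {n : ℕ} (A : Matrix (Fin n) (Fin n) ℝ) : Prop :=
  ∀ μ ∈ spectrum ℂ (A.map Complex.ofReal), 0 < μ.re

/-- A (possibly nonsymmetric) real matrix is positive definite if `zᵀ M z > 0`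
for all nonzero `z ∈ ℝⁿ`. -/
def PosDefMat {n : ℕ} (M : Matrix (Fin n) (Fin n) ℝ) : Prop :=
  ∀ z : Fin n → ℝ, z ≠ 0 → 0 < z ⬝ᵥ M.mulVec z

/-- `A` is diagonalizable over ℝ. -/
def DiagonalizableR {n : ℕ} (A : Matrix (Fin n) (Fin n) ℝ) : Prop :=
  ∃ P Λ : Matrix (Fin n) (Fin n) ℝ, IsUnit P.det ∧ Λ.IsDiag ∧ A = P * Λ * P⁻¹

/- ### Auxiliary lemmas -/

lemma symm_isHermitian {n : ℕ} {M : Matrix (Fin n) (Fin n) ℝ} (h : M.IsSymm) :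
    M.IsHermitian := by
  rwa [Matrix.IsHermitian, conjTranspose_eq_transpose_of_trivial]

lemma hermitian_isSymm {n : ℕ} {M : Matrix (Fin n) (Fin n) ℝ} (h : M.IsHermitian) :
    M.IsSymm := by
  rwa [Matrix.IsHermitian, conjTranspose_eq_transpose_of_trivial] at h

lemma posDef_of_posDefMat {n : ℕ} {M : Matrix (Fin n) (Fin n) ℝ} (hs : M.IsSymm)
    (h : PosDefMat M) : M.PosDef := by
  refine posDef_iff_dotProduct_mulVec.mpr ⟨symm_isHermitian hs, fun x hx => ?_⟩
  simpa using h x hx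

lemma posDefMat_of_posDef {n : ℕ} {M : Matrix (Fin n) (Fin n) ℝ} (h : M.PosDef) :
    PosDefMat M := by
  intro z hz
  simpa using h.dotProduct_mulVec_pos hz

lemma diag_of_symm {n : ℕ} {M : Matrix (Fin n) (Fin n) ℝ} (h : M.IsSymm) :
    DiagonalizableR M := by
  have hH : M.IsHermitian := symm_isHermitian h
  set U : Matrix (Fin n) (Fin n) ℝ := (hH.eigenvectorUnitary : Matrix (Fin n) (Fin n) ℝ) with hU
  have hu : U * star U = 1 := (Matrix.mem_unitaryGroup_iff).mp hH.eigenvectorUnitary.2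
  have hdet : IsUnit U.det := by
    apply IsUnit.of_mul_eq_one (star U).det
    rw [← det_mul, hu, det_one]
  have hinv : U⁻¹ = star U := inv_eq_right_inv hu
  refine ⟨U, diagonal (RCLike.ofReal ∘ hH.eigenvalues), hdet, isDiag_diagonal _, ?_⟩
  rw [hinv]
  exact hH.spectral_theorem

lemma diag_conj {n : ℕ} {S B : Matrix (Fin n) (Fin n) ℝ} (hS : IsUnit S.det)
    (hB : DiagonalizableR B) : DiagonalizableR (S * B * S⁻¹) := by
  obtain ⟨P, Λ, hP, hΛ, rfl⟩ := hB
  refine ⟨S * P, Λ, by rw [det_mul]; exact hS.mul hP, hΛ, ?_⟩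
  rw [Matrix.mul_inv_rev]
  simp only [Matrix.mul_assoc]

open scoped MatrixOrder in
lemma diag_of_fact {n : ℕ} {A A₁ A₂ : Matrix (Fin n) (Fin n) ℝ}
    (h₁ : A₁.IsSymm) (hpd : PosDefMat A₁) (h₂ : A₂.IsSymm)
    (h : A = A₁ * A₂ ∨ A = A₂ * A₁) : DiagonalizableR A := by
  have hPD : A₁.PosDef := posDef_of_posDefMat h₁ hpd
  set S := CFC.sqrt A₁ with hSdef
  have hSH : S.IsHermitian := (nonneg_iff_posSemidef.mp (CFC.sqrt_nonneg A₁)).1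
  have hSS : S * S = A₁ := CFC.sqrt_mul_sqrt_self A₁ (nonneg_iff_posSemidef.mpr hPD.posSemidef)
  have hSsymm : S.IsSymm := hermitian_isSymm hSH
  have hdet : IsUnit S.det := by
    have hA1 : (0 : ℝ) < A₁.det := hPD.det_pos
    rw [← hSS, det_mul] at hA1
    exact isUnit_iff_ne_zero.mpr (fun h0 => by simp [h0] at hA1)
  have hBsymm : (S * A₂ * S).IsSymm := by
    rw [Matrix.IsSymm, transpose_mul, transpose_mul, hSsymm.eq, h₂.eq, Matrix.mul_assoc]
  have hBdiag : DiagonalizableR (S * A₂ * S) := diag_of_symm hBsymm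
  rcases h with rfl | rfl
  · have key : A₁ * A₂ = S * (S * A₂ * S) * S⁻¹ := by
      have h1 : S * (S * A₂ * S) * S⁻¹ = S * S * A₂ * (S * S⁻¹) := by
        simp only [Matrix.mul_assoc]
      rw [h1, mul_nonsing_inv _ hdet, Matrix.mul_one, hSS]
    rw [key]; exact diag_conj hdet hBdiag
  · have key : A₂ * A₁ = S⁻¹ * (S * A₂ * S) * (S⁻¹)⁻¹ := by
      rw [nonsing_inv_nonsing_inv _ hdet]
      have h1 : S⁻¹ * (S * A₂ * S) * S = (S⁻¹ * S) * (A₂ * (S * S)) := by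
        simp only [Matrix.mul_assoc]
      rw [h1, nonsing_inv_mul _ hdet, Matrix.one_mul, hSS]
    rw [key]; exact diag_conj (isUnit_nonsing_inv_det _ hdet) hBdiag

lemma posDef_mul_transpose {n : ℕ} {P : Matrix (Fin n) (Fin n) ℝ} (hP : IsUnit P.det) :
    (P * Pᵀ).PosDef := by
  refine posDef_iff_dotProduct_mulVec.mpr ⟨?_, ?_⟩
  · rw [Matrix.IsHermitian, conjTranspose_eq_transpose_of_trivial, transpose_mul,
      transpose_transpose]
  · intro z hz
    have hw : Pᵀ *ᵥ z ≠ 0 := by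
      intro h0
      apply hz
      have : (Pᵀ)⁻¹ *ᵥ (Pᵀ *ᵥ z) = z := by
        rw [mulVec_mulVec, nonsing_inv_mul _ (by rwa [det_transpose]), one_mulVec]
      rw [h0, mulVec_zero] at this
      exact this.symm
    have key : star z ⬝ᵥ (P * Pᵀ) *ᵥ z = (Pᵀ *ᵥ z) ⬝ᵥ (Pᵀ *ᵥ z) := by
      rw [star_trivial, ← mulVec_mulVec, dotProduct_mulVec, ← mulVec_transpose]
    rw [key]
    have hnn : 0 ≤ (Pᵀ *ᵥ z) ⬝ᵥ (Pᵀ *ᵥ z) := by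
      have := dotProduct_star_self_nonneg (Pᵀ *ᵥ z)
      rwa [star_trivial] at this
    rcases lt_or_eq_of_le hnn with h | h
    · exact h
    · exact absurd (dotProduct_self_eq_zero.mp h.symm) hw

/-- Symmetric factorization: `A` is diagonalizable over ℝ iff `A = A₁·A₂`
(and likewise iff `A = A₂·A₁`) with `A₁` symmetric positive definite and
`A₂` symmetric. -/
theorem diagonalizable_iff_symm_factorization {n : ℕ}
    (A : Matrix (Fin n) (Fin n) ℝ) :
    (DiagonalizableR A ↔
      ∃ A₁ A₂ : Matrix (Fin n) (Fin n) ℝ,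
        A₁.IsSymm ∧ PosDefMat A₁ ∧ A₂.IsSymm ∧ A = A₁ * A₂) ∧
    (DiagonalizableR A ↔
      ∃ A₁ A₂ : Matrix (Fin n) (Fin n) ℝ,
        A₁.IsSymm ∧ PosDefMat A₁ ∧ A₂.IsSymm ∧ A = A₂ * A₁) := by
  constructor
  · constructor
    · rintro ⟨P, Λ, hP, hΛ, rfl⟩
      have hPPt := posDef_mul_transpose hP
      have hPt : IsUnit (Pᵀ).det := by rwa [det_transpose]
      refine ⟨P * Pᵀ, (P⁻¹)ᵀ * Λ * P⁻¹, hermitian_isSymm hPPt.1, posDefMat_of_posDef hPPt,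
        ?_, ?_⟩
      · rw [Matrix.IsSymm, transpose_mul, transpose_mul, transpose_transpose, hΛ.isSymm.eq,
          Matrix.mul_assoc]
      · rw [transpose_nonsing_inv]
        have : P * Pᵀ * ((Pᵀ)⁻¹ * Λ * P⁻¹) = P * ((Pᵀ * (Pᵀ)⁻¹) * (Λ * P⁻¹)) := by
          simp only [Matrix.mul_assoc]
        rw [this, mul_nonsing_inv _ hPt, Matrix.one_mul, Matrix.mul_assoc]
    · rintro ⟨A₁, A₂, h₁, hpd, h₂, hA⟩
      exact diag_of_fact h₁ hpd h₂ (Or.inl hA)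
  · constructor
    · rintro ⟨P, Λ, hP, hΛ, rfl⟩
      have hPPt := posDef_mul_transpose hP
      have hPt : IsUnit (Pᵀ).det := by rwa [det_transpose]
      refine ⟨(P * Pᵀ)⁻¹, P * Λ * Pᵀ, hermitian_isSymm hPPt.inv.1,
        posDefMat_of_posDef hPPt.inv, ?_, ?_⟩
      · rw [Matrix.IsSymm, transpose_mul, transpose_mul, transpose_transpose, hΛ.isSymm.eq,
          Matrix.mul_assoc]
      · rw [Matrix.mul_inv_rev]
        have : P * Λ * Pᵀ * ((Pᵀ)⁻¹ * P⁻¹) = P * Λ * ((Pᵀ * (Pᵀ)⁻¹) * P⁻¹) := by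
          simp only [Matrix.mul_assoc]
        rw [this, mul_nonsing_inv _ hPt, Matrix.one_mul]
    · rintro ⟨A₁, A₂, h₁, hpd, h₂, hA⟩
      exact diag_of_fact h₁ hpd h₂ (Or.inr hA)
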